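/- Let (F_k)_{k≥1} be a sequence of finite partitions of [0,1) into intervals with max_{J ∈ F_k} |J| → 0 as k → ∞, and let (E_k) be measurable subsets of [0,1) such that |E_k ∩ F| > c|F| for every F ∈ F_k, where c > 0 is a fixed constant. If a_k > 0 and ∑_{k≥1} a_k = ∞, then ∑_{k≥1} a_k 𝟙_{E_k}(x) = ∞ for almost every x ∈ [0,1). -/

import Mathlib

open MeasureTheory Set ENNReal

lemma stmt8_core (F : ℕ → Finset (ℝ × ℝ)) (E : ℕ → Set ℝ) (c : ℝ) (hc : 0 < c) (hc1 : c < 1)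
    (hlt : ∀ k, ∀ p ∈ F k, p.1 < p.2)
    (hpart : ∀ k, ⋃ p ∈ F k, Set.Ico p.1 p.2 = Set.Ico (0 : ℝ) 1)
    (hdisj : ∀ k, ∀ p ∈ F k, ∀ q ∈ F k, p ≠ q →
      Disjoint (Set.Ico p.1 p.2) (Set.Ico q.1 q.2))
    (hmesh : ∀ ε > (0 : ℝ), ∃ K, ∀ k ≥ K, ∀ p ∈ F k, p.2 - p.1 < ε)
    (hEmeas : ∀ k, MeasurableSet (E k)) (hEsub : ∀ k, E k ⊆ Set.Ico (0 : ℝ) 1)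
    (hEc : ∀ k, ∀ p ∈ F k,
      ENNReal.ofReal (c * (p.2 - p.1)) < volume (E k ∩ Set.Ico p.1 p.2))
    (a : ℕ → ℝ) (hapos : ∀ k, 0 < a k) (hadiv : ¬ Summable a) (M : ℝ) :
    volume {x | x ∈ Set.Ico (0:ℝ) 1 ∧ ∀ n, ∑ k ∈ Finset.range n,
      a k * (E k).indicator (fun _ => (1 : ℝ)) x ≤ M} = 0 := by
  classical
  set μ : Measure ℝ := volume with hμ
  set D : Set ℝ := {x | x ∈ Set.Ico (0:ℝ) 1 ∧ ∀ n, ∑ k ∈ Finset.range n,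
      a k * (E k).indicator (fun _ => (1 : ℝ)) x ≤ M} with hD
  have hDmeas : MeasurableSet D := by
    have : D = Set.Ico (0:ℝ) 1 ∩ ⋂ n, {x | ∑ k ∈ Finset.range n,
        a k * (E k).indicator (fun _ => (1 : ℝ)) x ≤ M} := by
      ext x; simp [hD, Set.mem_iInter, and_comm]
    rw [this]
    exact measurableSet_Ico.inter <| MeasurableSet.iInter fun n => measurableSet_le
        (Finset.measurable_sum _ fun k _ =>
          (measurable_const.indicator (hEmeas k)).const_mul (a k)) measurable_const
  by_contra hpos
  -- get a density point of D
  have hne : μ.restrict D ≠ 0 := fun h => hpos (Measure.restrict_eq_zero.mp h)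
  haveI : (ae (μ.restrict D)).NeBot := ae_neBot.mpr hne
  obtain ⟨x, hxD, hxball⟩ := ((ae_restrict_mem hDmeas).and
    (Besicovitch.ae_tendsto_measure_inter_div μ D)).exists
  have hM : 0 ≤ M := by simpa using hxD.2 0
  have ht1 : ENNReal.ofReal (1 - c/8) < 1 := by
    rw [← ENNReal.ofReal_one, ENNReal.ofReal_lt_ofReal_iff one_pos]
    linarith
  obtain ⟨r, hrt, hr0⟩ := ((hxball.eventually_const_lt ht1).and self_mem_nhdsWithin).exists
  have hr : (0:ℝ) < r := hr0
  have hcb : μ (Metric.closedBall x r) = ENNReal.ofReal (2*r) := by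
    rw [Real.closedBall_eq_Icc, Real.volume_Icc]
    congr 1; ring
  set B : Set ℝ := D ∩ Metric.closedBall x r with hBdef
  have hBmeas : MeasurableSet B := hDmeas.inter measurableSet_closedBall
  have hBfin : μ B ≠ ⊤ := by
    refine (lt_of_le_of_lt (measure_mono Set.inter_subset_right) ?_).ne
    rw [hcb]; exact ENNReal.ofReal_lt_top
  have hBlow : ENNReal.ofReal ((1 - c/8) * (2*r)) ≤ μ B := by
    have hb0 : μ (Metric.closedBall x r) ≠ 0 := by
      rw [hcb]; simp only [ne_eq, ENNReal.ofReal_eq_zero, not_le]; linarith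
    have hbt : μ (Metric.closedBall x r) ≠ ⊤ := by rw [hcb]; exact ENNReal.ofReal_ne_top
    rw [ENNReal.ofReal_mul (by linarith), ← hcb]
    calc ENNReal.ofReal (1 - c/8) * μ (Metric.closedBall x r)
        ≤ μ (D ∩ Metric.closedBall x r) / μ (Metric.closedBall x r)
            * μ (Metric.closedBall x r) := mul_le_mul_of_nonneg_right hrt.le (by simp)
      _ = μ B := ENNReal.div_mul_cancel hb0 hbt
  have hmb : (1 - c/8) * (2*r) ≤ (μ B).toReal := by
    have := ENNReal.toReal_mono hBfin hBlow
    rwa [ENNReal.toReal_ofReal (by nlinarith)] at this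
  obtain ⟨K, hK⟩ := hmesh (c*r/4) (by positivity)
  -- key lower bound on μ (E k ∩ B) for k ≥ K
  have hkey : ∀ k, K ≤ k → ENNReal.ofReal (c * r) ≤ μ (E k ∩ B) := by
    intro k hk
    set T : Finset (ℝ × ℝ) := (F k).filter
      (fun p => (Set.Ico p.1 p.2 ∩ Metric.closedBall x r).Nonempty) with hT
    have hTdisj : (↑T : Set (ℝ × ℝ)).PairwiseDisjoint (fun p => Set.Ico p.1 p.2) := by
      intro p hp q hq hpq
      exact hdisj k p (Finset.mem_of_mem_filter p hp) q (Finset.mem_of_mem_filter q hq) hpq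
    set L : ℝ≥0∞ := ∑ p ∈ T, μ (Set.Ico p.1 p.2) with hL
    have hLlen : L ≤ ENNReal.ofReal (2*r + c*r/2) := by
      rw [hL, ← measure_biUnion_finset hTdisj (fun p _ => measurableSet_Ico)]
      have hsub : (⋃ p ∈ T, Set.Ico p.1 p.2) ⊆ Set.Icc (x - r - c*r/4) (x + r + c*r/4) := by
        intro z hz
        simp only [Set.mem_iUnion] at hz
        obtain ⟨p, hpT, hz⟩ := hz
        rw [hT, Finset.mem_filter] at hpT
        obtain ⟨hpF, ⟨y, hy1, hy2⟩⟩ := hpT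
        have hmesh' := hK k hk p hpF
        rw [Real.closedBall_eq_Icc] at hy2
        obtain ⟨hz1, hz2⟩ := hz
        obtain ⟨hy11, hy12⟩ := hy1
        obtain ⟨hy21, hy22⟩ := hy2
        constructor
        · simp only [Set.mem_Ico] at *; linarith
        · simp only [Set.mem_Ico] at *; linarith
      refine le_trans (measure_mono hsub) ?_
      rw [Real.volume_Icc]
      apply ENNReal.ofReal_le_ofReal
      linarith
    have hBcover : μ B ≤ ∑ p ∈ T, μ (B ∩ Set.Ico p.1 p.2) := by
      have hsub : B ⊆ ⋃ p ∈ T, (B ∩ Set.Ico p.1 p.2) := by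
        intro z hz
        have hz01 : z ∈ Set.Ico (0:ℝ) 1 := hz.1.1
        rw [← hpart k] at hz01
        simp only [Set.mem_iUnion] at hz01
        obtain ⟨p, hpF, hzp⟩ := hz01
        have hpT : p ∈ T := by
          rw [hT, Finset.mem_filter]
          exact ⟨hpF, ⟨z, hzp, hz.2⟩⟩
        exact Set.mem_biUnion hpT ⟨hz, hzp⟩
      exact le_trans (measure_mono hsub) (measure_biUnion_finset_le _ _)
    have hcell : ∀ p ∈ T, ENNReal.ofReal c * μ (Set.Ico p.1 p.2) + μ (B ∩ Set.Ico p.1 p.2)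
        ≤ μ (Set.Ico p.1 p.2) + μ (E k ∩ B ∩ Set.Ico p.1 p.2) := by
      intro p hpT
      have hpF : p ∈ F k := Finset.mem_of_mem_filter p hpT
      have h1 : ENNReal.ofReal c * μ (Set.Ico p.1 p.2) ≤ μ (E k ∩ Set.Ico p.1 p.2) := by
        rw [Real.volume_Ico, ← ENNReal.ofReal_mul hc.le]
        exact (hEc k p hpF).le
      have h2 : μ (E k ∩ Set.Ico p.1 p.2) + μ (B ∩ Set.Ico p.1 p.2)
          ≤ μ (Set.Ico p.1 p.2) + μ (E k ∩ B ∩ Set.Ico p.1 p.2) := by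
        rw [← measure_union_add_inter (E k ∩ Set.Ico p.1 p.2) (hBmeas.inter measurableSet_Ico)]
        refine add_le_add (measure_mono
          (Set.union_subset Set.inter_subset_right Set.inter_subset_right))
          (measure_mono ?_)
        intro z hz
        simp only [Set.mem_inter_iff] at *
        tauto
      calc ENNReal.ofReal c * μ (Set.Ico p.1 p.2) + μ (B ∩ Set.Ico p.1 p.2)
          ≤ μ (E k ∩ Set.Ico p.1 p.2) + μ (B ∩ Set.Ico p.1 p.2) := by gcongr
        _ ≤ _ := h2
    have hEBsum : ∑ p ∈ T, μ (E k ∩ B ∩ Set.Ico p.1 p.2) ≤ μ (E k ∩ B) := by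
      rw [← measure_biUnion_finset ?_ (fun p _ => ((hEmeas k).inter hBmeas).inter measurableSet_Ico)]
      · exact measure_mono (Set.iUnion₂_subset fun p _ => Set.inter_subset_left)
      · intro p hp q hq hpq
        exact (hdisj k p (Finset.mem_of_mem_filter p hp) q (Finset.mem_of_mem_filter q hq)
          hpq).mono Set.inter_subset_right Set.inter_subset_right
    have hsum := Finset.sum_le_sum hcell
    rw [Finset.sum_add_distrib, Finset.sum_add_distrib, ← Finset.mul_sum, ← hL] at hsum
    have h5 : ENNReal.ofReal c * L + μ B ≤ L + μ (E k ∩ B) :=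
      le_trans (add_le_add le_rfl hBcover) (le_trans hsum (add_le_add le_rfl hEBsum))
    have hLfin : L ≠ ⊤ := (lt_of_le_of_lt hLlen ENNReal.ofReal_lt_top).ne
    have hEBfin : μ (E k ∩ B) ≠ ⊤ :=
      (lt_of_le_of_lt (measure_mono Set.inter_subset_right) (lt_top_iff_ne_top.mpr hBfin)).ne
    have h6 : c * L.toReal + (μ B).toReal ≤ L.toReal + (μ (E k ∩ B)).toReal := by
      have h7 := ENNReal.toReal_mono (by
        exact ENNReal.add_ne_top.mpr ⟨hLfin, hEBfin⟩) h5
      rwa [ENNReal.toReal_add (ENNReal.mul_ne_top ENNReal.ofReal_ne_top hLfin) hBfin,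
        ENNReal.toReal_add hLfin hEBfin, ENNReal.toReal_mul,
        ENNReal.toReal_ofReal hc.le] at h7
    have hl_ub : L.toReal ≤ 2*r + c*r/2 := by
      have := ENNReal.toReal_mono ENNReal.ofReal_ne_top hLlen
      rwa [ENNReal.toReal_ofReal (by nlinarith)] at this
    have hl0 : 0 ≤ L.toReal := ENNReal.toReal_nonneg
    have hgoal : c * r ≤ (μ (E k ∩ B)).toReal := by
      have hmul : (1 - c) * L.toReal ≤ (1 - c) * (2*r + c*r/2) :=
        mul_le_mul_of_nonneg_left hl_ub (by linarith)
      nlinarith [mul_pos hc hr, mul_nonneg (mul_nonneg hc.le hc.le) hr.le, hmb, h6, hmul]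
    calc ENNReal.ofReal (c*r) ≤ ENNReal.ofReal ((μ (E k ∩ B)).toReal) :=
        ENNReal.ofReal_le_ofReal hgoal
      _ = μ (E k ∩ B) := ENNReal.ofReal_toReal hEBfin
  -- the integral bound
  have hint : ∀ n, ∑ k ∈ Finset.Ico K n, ENNReal.ofReal (a k) * μ (E k ∩ B)
      ≤ ENNReal.ofReal M * μ B := by
    intro n
    have h1 : ∀ k, ENNReal.ofReal (a k) * μ (E k ∩ B)
        = ∫⁻ y in B, (E k).indicator (fun _ => ENNReal.ofReal (a k)) y ∂μ := by
      intro k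
      rw [lintegral_indicator (hEmeas k), setLIntegral_const, Measure.restrict_apply (hEmeas k)]
    calc ∑ k ∈ Finset.Ico K n, ENNReal.ofReal (a k) * μ (E k ∩ B)
        = ∑ k ∈ Finset.Ico K n, ∫⁻ y in B, (E k).indicator (fun _ => ENNReal.ofReal (a k)) y ∂μ :=
          Finset.sum_congr rfl fun k _ => h1 k
      _ = ∫⁻ y in B, ∑ k ∈ Finset.Ico K n, (E k).indicator (fun _ => ENNReal.ofReal (a k)) y ∂μ :=
          (lintegral_finset_sum _ (fun k _ => measurable_const.indicator (hEmeas k))).symm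
      _ ≤ ∫⁻ _ in B, ENNReal.ofReal M ∂μ := by
          refine setLIntegral_mono measurable_const fun y hy => ?_
          have hyD : y ∈ D := hy.1
          have heq : ∀ k, (E k).indicator (fun _ => ENNReal.ofReal (a k)) y
              = ENNReal.ofReal (a k * (E k).indicator (fun _ => (1:ℝ)) y) := by
            intro k; by_cases h : y ∈ E k <;> simp [h]
          rw [Finset.sum_congr rfl (fun k _ => heq k),
            ← ENNReal.ofReal_sum_of_nonneg (fun k _ =>
              mul_nonneg (hapos k).le (Set.indicator_nonneg (fun _ _ => zero_le_one) y))]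
          apply ENNReal.ofReal_le_ofReal
          calc ∑ k ∈ Finset.Ico K n, a k * (E k).indicator (fun _ => (1:ℝ)) y
              ≤ ∑ k ∈ Finset.range n, a k * (E k).indicator (fun _ => (1:ℝ)) y := by
                rw [Finset.range_eq_Ico]
                exact Finset.sum_le_sum_of_subset_of_nonneg
                  (Finset.Ico_subset_Ico (Nat.zero_le K) le_rfl)
                  (fun k _ _ => mul_nonneg (hapos k).le
                    (Set.indicator_nonneg (fun _ _ => zero_le_one) y))
            _ ≤ M := hyD.2 n
      _ = ENNReal.ofReal M * μ B := setLIntegral_const _ _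
  -- conclude summability, contradiction
  have hcr : (0:ℝ) < c * r := mul_pos hc hr
  have hsumbound : ∀ n, ∑ k ∈ Finset.Ico K n, a k ≤ M * (μ B).toReal / (c * r) := by
    intro n
    have h2 : ENNReal.ofReal ((∑ k ∈ Finset.Ico K n, a k) * (c * r))
        ≤ ENNReal.ofReal (M * (μ B).toReal) := by
      rw [Finset.sum_mul, ENNReal.ofReal_sum_of_nonneg (fun k _ =>
        mul_nonneg (hapos k).le hcr.le)]
      calc ∑ k ∈ Finset.Ico K n, ENNReal.ofReal (a k * (c * r))
          ≤ ∑ k ∈ Finset.Ico K n, ENNReal.ofReal (a k) * μ (E k ∩ B) := by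
            refine Finset.sum_le_sum fun k hk => ?_
            rw [ENNReal.ofReal_mul (hapos k).le]
            exact mul_le_mul_of_nonneg_left (hkey k (Finset.mem_Ico.mp hk).1) (by simp)
        _ ≤ ENNReal.ofReal M * μ B := hint n
        _ = ENNReal.ofReal (M * (μ B).toReal) := by
            rw [ENNReal.ofReal_mul hM, ENNReal.ofReal_toReal hBfin]
    rw [ENNReal.ofReal_le_ofReal_iff (mul_nonneg hM ENNReal.toReal_nonneg)] at h2
    rw [le_div_iff₀ hcr]
    exact h2
  refine hadiv (summable_of_sum_range_le
    (c := ∑ k ∈ Finset.range K, a k + M * (μ B).toReal / (c*r)) (fun k => (hapos k).le) ?_)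
  intro n
  rcases le_total n K with h | h
  · have h3 : ∑ k ∈ Finset.range n, a k ≤ ∑ k ∈ Finset.range K, a k :=
      Finset.sum_le_sum_of_subset_of_nonneg (Finset.range_subset_range.mpr h)
        (fun k _ _ => (hapos k).le)
    have h0 : 0 ≤ M * (μ B).toReal / (c*r) :=
      div_nonneg (mul_nonneg hM ENNReal.toReal_nonneg) hcr.le
    linarith
  · rw [Finset.range_eq_Ico, ← Finset.sum_Ico_consecutive a (Nat.zero_le K) h,
      ← Finset.range_eq_Ico]
    exact add_le_add le_rfl (hsumbound n)

theorem stmt_8 (F : ℕ → Finset (ℝ × ℝ)) (E : ℕ → Set ℝ) (c : ℝ) (hc : 0 < c)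
    (hlt : ∀ k, ∀ p ∈ F k, p.1 < p.2)
    (hpart : ∀ k, ⋃ p ∈ F k, Set.Ico p.1 p.2 = Set.Ico (0 : ℝ) 1)
    (hdisj : ∀ k, ∀ p ∈ F k, ∀ q ∈ F k, p ≠ q →
      Disjoint (Set.Ico p.1 p.2) (Set.Ico q.1 q.2))
    (hmesh : ∀ ε > (0 : ℝ), ∃ K, ∀ k ≥ K, ∀ p ∈ F k, p.2 - p.1 < ε)
    (hEmeas : ∀ k, MeasurableSet (E k)) (hEsub : ∀ k, E k ⊆ Set.Ico (0 : ℝ) 1)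
    (hEc : ∀ k, ∀ p ∈ F k,
      ENNReal.ofReal (c * (p.2 - p.1)) < volume (E k ∩ Set.Ico p.1 p.2))
    (a : ℕ → ℝ) (hapos : ∀ k, 0 < a k) (hadiv : ¬ Summable a) :
    ∀ᵐ x ∂(volume.restrict (Set.Ico (0 : ℝ) 1)),
      ¬ Summable fun k => a k * (E k).indicator (fun _ => (1 : ℝ)) x := by
  classical
  -- c < 1
  have hc1 : c < 1 := by
    have h0 : (0:ℝ) ∈ Set.Ico (0:ℝ) 1 := by constructor <;> norm_num
    rw [← hpart 0] at h0
    simp only [Set.mem_iUnion] at h0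
    obtain ⟨p, hp, hx⟩ := h0
    have hlen : 0 < p.2 - p.1 := sub_pos.mpr (hlt 0 p hp)
    have h1 : volume (E 0 ∩ Set.Ico p.1 p.2) ≤ ENNReal.ofReal (p.2 - p.1) := by
      rw [← Real.volume_Ico]
      exact measure_mono Set.inter_subset_right
    have h2 := lt_of_lt_of_le (hEc 0 p hp) h1
    rw [ENNReal.ofReal_lt_ofReal_iff hlen] at h2
    nlinarith
  have hcore := stmt8_core F E c hc hc1 hlt hpart hdisj hmesh hEmeas hEsub hEc a hapos hadiv
  rw [ae_iff]
  simp only [not_not]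
  refine measure_mono_null (t := (⋃ M : ℕ, {x | x ∈ Set.Ico (0:ℝ) 1 ∧ ∀ n,
      ∑ k ∈ Finset.range n, a k * (E k).indicator (fun _ => (1:ℝ)) x ≤ (M:ℝ)}) ∪ (Set.Ico (0:ℝ) 1)ᶜ) ?_ ?_
  · intro x hx
    simp only [Set.mem_setOf_eq] at hx
    by_cases hx01 : x ∈ Set.Ico (0:ℝ) 1
    · left
      refine Set.mem_iUnion.mpr ⟨⌈(∑' k, a k * (E k).indicator (fun _ => (1:ℝ)) x)⌉₊, hx01, fun n => ?_⟩
      have hnonneg : ∀ k, 0 ≤ a k * (E k).indicator (fun _ => (1:ℝ)) x := fun k =>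
        mul_nonneg (hapos k).le (Set.indicator_nonneg (fun _ _ => zero_le_one) x)
      calc ∑ k ∈ Finset.range n, a k * (E k).indicator (fun _ => (1:ℝ)) x
          ≤ ∑' k, a k * (E k).indicator (fun _ => (1:ℝ)) x :=
            hx.sum_le_tsum _ (fun k _ => hnonneg k)
        _ ≤ _ := Nat.le_ceil _
    · right; exact hx01
  · refine le_antisymm (le_trans (measure_union_le _ _) ?_) zero_le
    have h1 : (volume.restrict (Set.Ico (0:ℝ) 1)) (⋃ M : ℕ, {x | x ∈ Set.Ico (0:ℝ) 1 ∧ ∀ n,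
        ∑ k ∈ Finset.range n, a k * (E k).indicator (fun _ => (1:ℝ)) x ≤ (M:ℝ)}) = 0 := by
      refine measure_iUnion_null fun M => le_antisymm (le_trans ?_ (hcore (M:ℝ)).le) zero_le
      exact Measure.restrict_le_self _
    have h2 : (volume.restrict (Set.Ico (0:ℝ) 1)) (Set.Ico (0:ℝ) 1)ᶜ = 0 := by
      rw [Measure.restrict_apply' measurableSet_Ico]
      simp
    rw [h1, h2]; simp
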